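/- Let G be a finite group and let p, q be distinct primes. If G contains a subgroup which is a Schmidt (p,q)-group, then q divides the order of G/O_{p',p}(G). (In graph terms: every edge of the Schmidt graph Γ_Sch(G) is an edge of the Hawkes graph Γ_H(G).) -/
import Mathlib


/-- The join of a set of normal subgroups is normal. -/
theorem sSup_normal {G : Type*} [Group G] (S : Set (Subgroup G)) (hS : ∀ N ∈ S, N.Normal) :
    (sSup S).Normal := by
  constructor
  intro n hn g
  rw [sSup_eq_iSup'] at hn ⊢
  refine Subgroup.iSup_induction (C := fun x => g * x * g⁻¹ ∈ ⨆ N : S, (N : Subgroup G))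
    _ hn ?_ ?_ ?_
  · intro N x hx
    exact Subgroup.mem_iSup_of_mem N ((hS N N.2).conj_mem x hx g)
  · simpa using Subgroup.one_mem _
  · intro x y hx hy
    have h : g * (x * y) * g⁻¹ = (g * x * g⁻¹) * (g * y * g⁻¹) := by group
    rw [h]; exact Subgroup.mul_mem _ hx hy

/-- The `p'`-core `O_{p'}(G)`: the largest normal subgroup of `G` of order coprime to `p`,
realized as the join of all normal subgroups of order coprime to `p`. -/
def pPrimeCore (p : ℕ) (G : Type*) [Group G] : Subgroup G :=
  sSup {N : Subgroup G | N.Normal ∧ Nat.Coprime (Nat.card N) p}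

instance pPrimeCore_normal (p : ℕ) (G : Type*) [Group G] : (pPrimeCore p G).Normal :=
  sSup_normal _ fun _ hN => hN.1

/-- The `p`-core `O_p(G)`: the largest normal `p`-subgroup of `G`,
realized as the join of all normal `p`-subgroups. -/
def pCore (p : ℕ) (G : Type*) [Group G] : Subgroup G :=
  sSup {N : Subgroup G | N.Normal ∧ IsPGroup p N}

instance pCore_normal (p : ℕ) (G : Type*) [Group G] : (pCore p G).Normal :=
  sSup_normal _ fun _ hN => hN.1

/-- `O_{p',p}(G)`: the preimage in `G` of `O_p(G / O_{p'}(G))`. -/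
def OpPrimeP (p : ℕ) (G : Type*) [Group G] : Subgroup G :=
  (pCore p (G ⧸ pPrimeCore p G)).comap (QuotientGroup.mk' (pPrimeCore p G))

section Aux

variable {G : Type*} [Group G]

lemma aux_finite_subgroup [Finite G] : Finite (Subgroup G) :=
  Finite.of_injective (fun H : Subgroup G => (H : Set G)) SetLike.coe_injective

/-- The cardinality of a join divides the product of cardinalities, when one factor is normal. -/
lemma aux_card_sup_dvd [Finite G] (H K : Subgroup G) [K.Normal] :
    Nat.card ↥(H ⊔ K) ∣ Nat.card H * Nat.card K := by
  have h1 : Nat.card ↥(K.subgroupOf (H ⊔ K)) * (K.subgroupOf (H ⊔ K)).index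
      = Nat.card ↥(H ⊔ K) := Subgroup.card_mul_index _
  have h2 : Nat.card ↥(K.subgroupOf (H ⊔ K)) = Nat.card K :=
    Nat.card_congr (Subgroup.subgroupOfEquivOfLe le_sup_right).toEquiv
  have h3 : (K.subgroupOf (H ⊔ K)).index = K.relIndex H :=
    Subgroup.relIndex_sup_right H K
  have h4 : K.relIndex H ∣ Nat.card H := by
    have := Subgroup.card_mul_index (K.subgroupOf H)
    exact Dvd.intro_left _ this
  calc Nat.card ↥(H ⊔ K) = Nat.card K * K.relIndex H := by rw [← h1, h2, h3]
    _ ∣ Nat.card K * Nat.card H := mul_dvd_mul_left _ h4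
    _ = Nat.card H * Nat.card K := mul_comm _ _

/-- A closure property transfers from members of a finite set of normal subgroups to its join. -/
lemma aux_sSup_induction [Finite G] (P : ℕ → Prop) (hone : P 1)
    (hdvd : ∀ m n, P m → n ∣ m → P n)
    (hmul : ∀ m n, P m → P n → P (m * n))
    (S : Set (Subgroup G)) (hS : ∀ N ∈ S, N.Normal ∧ P (Nat.card N)) :
    P (Nat.card (sSup S : Subgroup G)) := by
  haveI : Finite (Subgroup G) := aux_finite_subgroup
  have hfin : S.Finite := Set.toFinite S
  have hsup : (hfin.toFinset.sup id : Subgroup G) = sSup S := by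
    rw [Finset.sup_id_eq_sSup, hfin.coe_toFinset]
  rw [← hsup]
  have key : (hfin.toFinset.sup id).Normal ∧ P (Nat.card ↥(hfin.toFinset.sup id)) := by
    refine Finset.sup_induction (p := fun A : Subgroup G => A.Normal ∧ P (Nat.card ↥A)) ?_ ?_ ?_
    · exact ⟨inferInstance, by simpa using hone⟩
    · rintro A ⟨hA, hPA⟩ B ⟨hB, hPB⟩
      haveI := hB
      refine ⟨by exact Subgroup.sup_normal A B, ?_⟩
      exact hdvd _ _ (hmul _ _ hPA hPB) (aux_card_sup_dvd A B)
    · intro N hN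
      exact hS N (hfin.mem_toFinset.mp hN)
  exact key.2

lemma pPrimeCore_coprime (p : ℕ) (G : Type*) [Group G] [Finite G] :
    Nat.Coprime (Nat.card (pPrimeCore p G)) p := by
  refine aux_sSup_induction (fun n => Nat.Coprime n p) (Nat.coprime_one_left p) ?_ ?_ _ (fun N hN => hN)
  · exact fun m n hm hnm => Nat.Coprime.coprime_dvd_left hnm hm
  · exact fun m n hm hn => Nat.Coprime.mul hm hn

lemma pCore_isPGroup (p : ℕ) [Fact p.Prime] (G : Type*) [Group G] [Finite G] :
    IsPGroup p (pCore p G) := by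
  rw [IsPGroup.iff_card]
  have := aux_sSup_induction (G := G) (fun n => ∃ k, n = p ^ k) ⟨0, rfl⟩ ?_ ?_
    {N : Subgroup G | N.Normal ∧ IsPGroup p N} ?_
  · exact this
  · rintro m n ⟨k, rfl⟩ hnm
    exact (Nat.dvd_prime_pow Fact.out).mp hnm |>.imp fun j hj => hj.2
  · rintro m n ⟨k, rfl⟩ ⟨l, rfl⟩
    exact ⟨k + l, (pow_add p k l).symm⟩
  · exact fun N hN => ⟨hN.1, IsPGroup.iff_card.mp hN.2⟩

end Aux

/-- A Schmidt group: a non-nilpotent group all of whose proper subgroups are nilpotent. -/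
def IsSchmidt (G : Type*) [Group G] : Prop :=
  ¬ Group.IsNilpotent G ∧ ∀ H : Subgroup G, H ≠ ⊤ → Group.IsNilpotent H

/-- A Schmidt `(p,q)`-group: a Schmidt group whose order is divisible by exactly the
primes `p` and `q` and whose Sylow `p`-subgroup is normal. -/
def IsSchmidtPQ (p q : ℕ) (G : Type*) [Group G] : Prop :=
  IsSchmidt G ∧ (Nat.card G).primeFactors = {p, q} ∧ ∃ P : Sylow p G, (P : Subgroup G).Normal

/-- Every edge of the Schmidt graph is an edge of the Hawkes graph: if `G` contains a
Schmidt `(p,q)`-subgroup then `q` divides `|G / O_{p',p}(G)|`. -/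
theorem schmidt_edge_is_hawkes_edge {G : Type*} [Group G] [Finite G] {p q : ℕ}
    (hp : p.Prime) (hq : q.Prime) (hpq : p ≠ q)
    (h : ∃ H : Subgroup G, IsSchmidtPQ p q H) :
    q ∣ Nat.card (G ⧸ OpPrimeP p G) := by
  classical
  obtain ⟨H, ⟨hSch, hfac, Psyl, hPnorm⟩⟩ := h
  by_contra hdvd
  haveI : Fact p.Prime := ⟨hp⟩
  haveI : Fact q.Prime := ⟨hq⟩
  set N := pPrimeCore p G with hNdef
  set K := OpPrimeP p G with hKdef
  haveI hKnorm : K.Normal := Subgroup.normal_comap _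
  have hcardH : Nat.card ↥H ≠ 0 := Nat.card_pos.ne'
  set b := (Nat.card ↥H).factorization q with hbdef
  -- the q-part of H is contained in K (up to taking a Sylow q of K ⊓ H)
  set L := K.subgroupOf H with hLdef
  have h4 : ¬ q ∣ K.index := by rwa [Subgroup.index_eq_card]
  have h5 : ¬ q ∣ L.index := fun hc =>
    h4 (hc.trans (Subgroup.relIndex_dvd_index_of_normal K H))
  have h6 : q ^ b ∣ Nat.card ↥H := Nat.ordProj_dvd _ q
  have h7 : q ^ b ∣ Nat.card ↥L := by
    have hcop : Nat.Coprime (q ^ b) L.index :=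
      Nat.Coprime.pow_left b (hq.coprime_iff_not_dvd.mpr h5)
    have := Subgroup.card_mul_index L
    exact hcop.dvd_of_dvd_mul_right (by rw [this]; exact h6)
  obtain ⟨Q⟩ : Nonempty (Sylow q ↥L) := inferInstance
  have hcardL : Nat.card ↥L ≠ 0 := Nat.card_pos.ne'
  have hQcard : q ^ b ∣ Nat.card ↥(Q : Subgroup ↥L) := by
    rw [Sylow.card_eq_multiplicity]
    exact pow_dvd_pow q ((hq.pow_dvd_iff_le_factorization hcardL).mp h7)
  set Q' := (Q : Subgroup ↥L).map L.subtype with hQ'def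
  have hQ'card : Nat.card ↥Q' = Nat.card ↥(Q : Subgroup ↥L) :=
    (Nat.card_congr (Subgroup.equivMapOfInjective _ _ L.subtype_injective).toEquiv).symm
  -- Q' is contained in N ⊓ H
  set M := N.subgroupOf H with hMdef
  have hQ'M : Q' ≤ M := by
    rintro x hx
    obtain ⟨y, hy, rfl⟩ := hx
    show ((L.subtype y : ↥H) : G) ∈ N
    have hxK : ((y : ↥H) : G) ∈ K := y.2
    have hgK : (QuotientGroup.mk ((y : ↥H) : G) : G ⧸ N) ∈ pCore p (G ⧸ N) := hxK
    set g : G ⧸ N := QuotientGroup.mk ((y : ↥H) : G) with hgdef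
    obtain ⟨k, hk⟩ := pCore_isPGroup p (G ⧸ N) ⟨g, hgK⟩
    have hgp : g ^ p ^ k = 1 := Subtype.ext_iff.mp hk
    obtain ⟨n, hn⟩ := Q.2 ⟨y, hy⟩
    have hyq : y ^ q ^ n = 1 := Subtype.ext_iff.mp hn
    have hgq : g ^ q ^ n = 1 := by
      have : ((y : ↥H) : G) ^ q ^ n = 1 := by
        have := Subtype.ext_iff.mp (Subtype.ext_iff.mp hyq)
        simpa using this
      rw [hgdef, ← QuotientGroup.mk_pow, this, QuotientGroup.mk_one]
    have hcop : Nat.Coprime (p ^ k) (q ^ n) :=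
      Nat.Coprime.pow _ _ ((Nat.coprime_primes hp hq).mpr hpq)
    have : orderOf g = 1 := Nat.eq_one_of_dvd_coprimes hcop
      (orderOf_dvd_of_pow_eq_one hgp) (orderOf_dvd_of_pow_eq_one hgq)
    have hg1 : g = 1 := orderOf_eq_one_iff.mp this
    exact (QuotientGroup.eq_one_iff _).mp hg1
  have h8 : q ^ b ∣ Nat.card ↥M := by
    rw [← hQ'card] at hQcard
    exact hQcard.trans (Subgroup.card_dvd_of_le hQ'M)
  -- card M is coprime to p and divides card H, hence divides q ^ b
  have h9 : Nat.card ↥M ∣ Nat.card ↥N := by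
    have h9a : Nat.card ↥M = Nat.card ↥(N ⊓ H : Subgroup G) := by
      rw [hMdef, ← Subgroup.inf_subgroupOf_right]
      exact Nat.card_congr (Subgroup.subgroupOfEquivOfLe inf_le_right).toEquiv
    rw [h9a]
    exact Subgroup.card_dvd_of_le inf_le_left
  have h10 : Nat.Coprime (Nat.card ↥M) p :=
    Nat.Coprime.coprime_dvd_left h9 (pPrimeCore_coprime p G)
  have h11 : Nat.card ↥M ∣ ordCompl[p] (Nat.card ↥H) := by
    have hMH : Nat.card ↥M ∣ Nat.card ↥H := Subgroup.card_subgroup_dvd_card M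
    have := Nat.ordProj_mul_ordCompl_eq_self (Nat.card ↥H) p
    refine (Nat.Coprime.dvd_of_dvd_mul_left ?_ (by rw [this]; exact hMH))
    exact Nat.Coprime.pow_right _ h10
  have h12 : ordCompl[p] (Nat.card ↥H) ∣ q ^ b := by
    have hnz : ordCompl[p] (Nat.card ↥H) ≠ 0 := (Nat.ordCompl_pos p hcardH).ne'
    have huniq : ∀ {d : ℕ}, d.Prime → d ∣ ordCompl[p] (Nat.card ↥H) → d = q := by
      intro d hd hdvd'
      have hdH : d ∣ Nat.card ↥H := hdvd'.trans (Nat.ordCompl_dvd _ p)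
      have hmem : d ∈ (Nat.card ↥H).primeFactors := Nat.mem_primeFactors.mpr ⟨hd, hdH, hcardH⟩
      rw [hfac] at hmem
      rcases Finset.mem_insert.mp hmem with hh | hh
      · exact absurd (hh ▸ hdvd') (Nat.not_dvd_ordCompl hp hcardH)
      · exact Finset.mem_singleton.mp hh
    have hk := Nat.eq_prime_pow_of_unique_prime_dvd hnz huniq
    rw [hk]
    apply pow_dvd_pow
    have hdvdH : q ^ (ordCompl[p] (Nat.card ↥H)).primeFactorsList.length ∣ Nat.card ↥H := by
      rw [← hk]; exact Nat.ordCompl_dvd _ p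
    exact (hq.pow_dvd_iff_le_factorization hcardH).mp hdvdH
  have h13 : Nat.card ↥M = q ^ b := Nat.dvd_antisymm (h11.trans h12) h8
  -- M is a normal Sylow q-subgroup of H
  set Qsyl : Sylow q ↥H := Sylow.ofCard M h13 with hQsyl
  have hQsylcoe : (Qsyl : Subgroup ↥H) = M := Sylow.coe_ofCard M h13
  haveI hMnorm : M.Normal := Subgroup.normal_subgroupOf
  -- every Sylow subgroup of H is normal, so H is nilpotent: contradiction
  have hall : ∀ (r : ℕ) (_ : Fact r.Prime) (R : Sylow r ↥H), (R : Subgroup ↥H).Normal := by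
    intro r hr R
    by_cases hrH : r ∣ Nat.card ↥H
    · have hrmem : r ∈ (Nat.card ↥H).primeFactors :=
        Nat.mem_primeFactors.mpr ⟨hr.out, hrH, hcardH⟩
      rw [hfac] at hrmem
      rcases Finset.mem_insert.mp hrmem with hrp | hrq
      · subst hrp
        haveI := Sylow.unique_of_normal Psyl hPnorm
        have : R = Psyl := Subsingleton.elim _ _
        rw [this]; exact hPnorm
      · have : r = q := Finset.mem_singleton.mp hrq
        subst this
        haveI := Sylow.unique_of_normal Qsyl (by rw [hQsylcoe]; exact hMnorm)
        have : R = Qsyl := Subsingleton.elim _ _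
        rw [this, hQsylcoe]; exact hMnorm
    · have hc1 : Nat.card ↥(R : Subgroup ↥H) = 1 := by
        rw [Sylow.card_eq_multiplicity, Nat.factorization_eq_zero_of_not_dvd hrH, pow_zero]
      rw [Subgroup.card_eq_one.mp hc1]
      infer_instance
  exact hSch.1 (((isNilpotent_of_finite_tfae (G := ↥H)).out 3 0).mp hall)
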